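/- arXiv:1602.07137 — 4 statements merged into one kernel-verified Lean document; each statement's English description precedes it below -/
import Mathlib

section
/- For real numbers γ, δ > 0 and λ > 5: the expression λ²(γ-δ) + λ(δ-γ) + λγδ(γ-δ) + (γ+δ)(γ-δ) + γδ(δ-γ) + 2(δ-γ) + (γ-δ) factors as (γ-δ)(λ(λ-2) + γδ(λ-1) + (λ-1) + γ + δ), where the second factor is strictly positive; hence the expression is positive iff γ > δ, zero iff γ = δ, negative iff γ < δ. -/
theorem stmt14 (γ δ lam : ℝ) (hγ : γ > 0) (hδ : δ > 0) (hlam : lam > 5) :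
    lam ^ 2 * (γ - δ) + lam * (δ - γ) + lam * γ * δ * (γ - δ) + (γ + δ) * (γ - δ) +
        γ * δ * (δ - γ) + 2 * (δ - γ) + (γ - δ) =
      (γ - δ) * (lam * (lam - 2) + γ * δ * (lam - 1) + (lam - 1) + γ + δ) ∧
    lam * (lam - 2) + γ * δ * (lam - 1) + (lam - 1) + γ + δ > 0 ∧
    (lam ^ 2 * (γ - δ) + lam * (δ - γ) + lam * γ * δ * (γ - δ) + (γ + δ) * (γ - δ) +
        γ * δ * (δ - γ) + 2 * (δ - γ) + (γ - δ) > 0 ↔ γ > δ) ∧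
    (lam ^ 2 * (γ - δ) + lam * (δ - γ) + lam * γ * δ * (γ - δ) + (γ + δ) * (γ - δ) +
        γ * δ * (δ - γ) + 2 * (δ - γ) + (γ - δ) = 0 ↔ γ = δ) ∧
    (lam ^ 2 * (γ - δ) + lam * (δ - γ) + lam * γ * δ * (γ - δ) + (γ + δ) * (γ - δ) +
        γ * δ * (δ - γ) + 2 * (δ - γ) + (γ - δ) < 0 ↔ γ < δ) := by
  have hfac : lam ^ 2 * (γ - δ) + lam * (δ - γ) + lam * γ * δ * (γ - δ) + (γ + δ) * (γ - δ) +
      γ * δ * (δ - γ) + 2 * (δ - γ) + (γ - δ) =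
      (γ - δ) * (lam * (lam - 2) + γ * δ * (lam - 1) + (lam - 1) + γ + δ) := by ring
  have hpos : lam * (lam - 2) + γ * δ * (lam - 1) + (lam - 1) + γ + δ > 0 := by nlinarith [mul_pos (mul_pos hγ hδ) (show (0:ℝ) < lam - 1 by linarith)]
  refine ⟨hfac, hpos, ?_, ?_, ?_⟩
  · rw [hfac]; constructor
    · intro h; nlinarith
    · intro h; exact mul_pos (by linarith) hpos
  · rw [hfac]; constructor
    · intro h
      rcases mul_eq_zero.1 h with h1 | h1
      · linarith
      · linarith
    · intro h; rw [h]; ring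
  · rw [hfac]; constructor
    · intro h; nlinarith
    · intro h; nlinarith
end

section
/- For real numbers γ, δ > 0 and λ > 5: λ²δ²γ - λ²δ + λγ²δ - λγδ² + λδ - λγ + γ²δ² - γδ² - δγ² + δ + γ - 1 = (δγ-1)(λδ(λ-2) + γ(λ-1) + δ(λ-1) + δγ + 1), where the second factor is strictly positive; hence the expression has the same sign as δγ - 1. -/
theorem stmt15 (γ δ lam : ℝ) (hγ : γ > 0) (hδ : δ > 0) (hlam : lam > 5) :
    lam ^ 2 * δ ^ 2 * γ - lam ^ 2 * δ + lam * γ ^ 2 * δ - lam * γ * δ ^ 2 + lam * δ -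
        lam * γ + γ ^ 2 * δ ^ 2 - γ * δ ^ 2 - δ * γ ^ 2 + δ + γ - 1 =
      (δ * γ - 1) * (lam * δ * (lam - 2) + γ * (lam - 1) + δ * (lam - 1) + δ * γ + 1) ∧
    lam * δ * (lam - 2) + γ * (lam - 1) + δ * (lam - 1) + δ * γ + 1 > 0 ∧
    (lam ^ 2 * δ ^ 2 * γ - lam ^ 2 * δ + lam * γ ^ 2 * δ - lam * γ * δ ^ 2 + lam * δ -
        lam * γ + γ ^ 2 * δ ^ 2 - γ * δ ^ 2 - δ * γ ^ 2 + δ + γ - 1 > 0 ↔ δ * γ > 1) ∧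
    (lam ^ 2 * δ ^ 2 * γ - lam ^ 2 * δ + lam * γ ^ 2 * δ - lam * γ * δ ^ 2 + lam * δ -
        lam * γ + γ ^ 2 * δ ^ 2 - γ * δ ^ 2 - δ * γ ^ 2 + δ + γ - 1 < 0 ↔ δ * γ < 1) := by
  have hfac : lam ^ 2 * δ ^ 2 * γ - lam ^ 2 * δ + lam * γ ^ 2 * δ - lam * γ * δ ^ 2 + lam * δ -
        lam * γ + γ ^ 2 * δ ^ 2 - γ * δ ^ 2 - δ * γ ^ 2 + δ + γ - 1 =
      (δ * γ - 1) * (lam * δ * (lam - 2) + γ * (lam - 1) + δ * (lam - 1) + δ * γ + 1) := by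
    ring
  have hpos : lam * δ * (lam - 2) + γ * (lam - 1) + δ * (lam - 1) + δ * γ + 1 > 0 := by
    have := mul_pos hδ hγ
    nlinarith [mul_pos (show (0:ℝ) < lam by linarith) hδ]
  refine ⟨hfac, hpos, ?_, ?_⟩ <;> rw [hfac] <;>
    constructor <;> intro h <;> nlinarith
end

section
/- Let n ≥ 4 and let Q be the 4×4 matrix with rows (1, δx₁, x₂, x₃), (1/(δx₁), 1, x₂/x₁, x₃/x₁), (1/x₂, x₁/x₂, 1, γx₃/x₂), (1/x₃, x₁/x₃, x₂/(γx₃), 1), where x₁, x₂, x₃ > 0 and γ, δ > 0. Then the characteristic polynomial of Q is λ⁴ - 4λ³ - 2(γ + δ + 1/γ + 1/δ - 4)λ - (γ-1)²(δ-1)²/(γδ). -/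
set_option maxHeartbeats 1000000 in
theorem det_fin_four' (M : Matrix (Fin 4) (Fin 4) ℝ) :
    M.det =
      M 0 0 * (M 1 1 * (M 2 2 * M 3 3 - M 2 3 * M 3 2) - M 1 2 * (M 2 1 * M 3 3 - M 2 3 * M 3 1) + M 1 3 * (M 2 1 * M 3 2 - M 2 2 * M 3 1))
      - M 0 1 * (M 1 0 * (M 2 2 * M 3 3 - M 2 3 * M 3 2) - M 1 2 * (M 2 0 * M 3 3 - M 2 3 * M 3 0) + M 1 3 * (M 2 0 * M 3 2 - M 2 2 * M 3 0))
      + M 0 2 * (M 1 0 * (M 2 1 * M 3 3 - M 2 3 * M 3 1) - M 1 1 * (M 2 0 * M 3 3 - M 2 3 * M 3 0) + M 1 3 * (M 2 0 * M 3 1 - M 2 1 * M 3 0))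
      - M 0 3 * (M 1 0 * (M 2 1 * M 3 2 - M 2 2 * M 3 1) - M 1 1 * (M 2 0 * M 3 2 - M 2 2 * M 3 0) + M 1 2 * (M 2 0 * M 3 1 - M 2 1 * M 3 0)) := by
  rw [Matrix.det_succ_row_zero]
  simp [Fin.sum_univ_succ, Matrix.det_fin_three, Fin.succAbove, show (Fin.succ 2 : Fin 4) = 3 from rfl, show (Fin.castSucc 2 : Fin 4) = 2 from rfl, show ((1:Fin 4) < 3) from by decide]
  ring

set_option maxHeartbeats 2000000 in
theorem stmt18 (x₁ x₂ x₃ γ δ : ℝ) (hx₁ : 0 < x₁) (hx₂ : 0 < x₂) (hx₃ : 0 < x₃)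
    (hγ : 0 < γ) (hδ : 0 < δ) :
    ∀ lam : ℝ,
      (!![1, δ * x₁, x₂, x₃;
          1 / (δ * x₁), 1, x₂ / x₁, x₃ / x₁;
          1 / x₂, x₁ / x₂, 1, γ * x₃ / x₂;
          1 / x₃, x₁ / x₃, x₂ / (γ * x₃), 1] - lam • (1 : Matrix (Fin 4) (Fin 4) ℝ)).det =
        lam ^ 4 - 4 * lam ^ 3 - 2 * (γ + δ + 1 / γ + 1 / δ - 4) * lam -
          (γ - 1) ^ 2 * (δ - 1) ^ 2 / (γ * δ) := by
  intro lam
  have h1 := hx₁.ne'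
  have h2 := hx₂.ne'
  have h3 := hx₃.ne'
  have hg := hγ.ne'
  have hd := hδ.ne'
  have key : (!![1, δ * x₁, x₂, x₃;
          1 / (δ * x₁), 1, x₂ / x₁, x₃ / x₁;
          1 / x₂, x₁ / x₂, 1, γ * x₃ / x₂;
          1 / x₃, x₁ / x₃, x₂ / (γ * x₃), 1] - lam • (1 : Matrix (Fin 4) (Fin 4) ℝ)) =
      !![1 - lam, δ * x₁, x₂, x₃;
          1 / (δ * x₁), 1 - lam, x₂ / x₁, x₃ / x₁;
          1 / x₂, x₁ / x₂, 1 - lam, γ * x₃ / x₂;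
          1 / x₃, x₁ / x₃, x₂ / (γ * x₃), 1 - lam] := by
    ext i j
    fin_cases i <;> fin_cases j <;>
      simp [Matrix.one_apply, Matrix.vecHead, Matrix.vecTail]
  rw [key, det_fin_four']
  simp [Matrix.vecHead, Matrix.vecTail]
  field_simp
  ring
end

section
/- Let n ≥ 4, x₁,…,x_{n-1} > 0, and γ, δ > 0. Let P be the n×n pairwise comparison matrix obtained from the consistent matrix A with A₁ⱼ = x_{j-1} (and Aᵢⱼ = x_{j-1}/x_{i-1}, x₀ := 1) by multiplying the (1,2) entry by δ and the (1,3) entry by γ, and their reciprocal entries by 1/δ and 1/γ. Then the characteristic polynomial of P is (-1)ⁿ λ^{n-3}(λ³ - nλ² - (γ/δ + δ/γ) - (n-3)(γ + δ + 1/γ + 1/δ) + 4n - 10). -/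
set_option maxHeartbeats 1000000 in
theorem stmt19 (n : ℕ) (hn : 4 ≤ n) (x : Fin n → ℝ) (hx : ∀ i, 0 < x i)
    (hx0 : x ⟨0, by omega⟩ = 1) (γ δ : ℝ) (hγ : 0 < γ) (hδ : 0 < δ)
    (P : Matrix (Fin n) (Fin n) ℝ)
    (hP : ∀ i j : Fin n,
      P i j =
        if i = (⟨0, by omega⟩ : Fin n) ∧ j = (⟨1, by omega⟩ : Fin n) then
          δ * x j
        else if i = (⟨0, by omega⟩ : Fin n) ∧ j = (⟨2, by omega⟩ : Fin n) then
          γ * x j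
        else if i = (⟨1, by omega⟩ : Fin n) ∧ j = (⟨0, by omega⟩ : Fin n) then
          1 / (δ * x (⟨1, by omega⟩ : Fin n))
        else if i = (⟨2, by omega⟩ : Fin n) ∧ j = (⟨0, by omega⟩ : Fin n) then
          1 / (γ * x (⟨2, by omega⟩ : Fin n))
        else x j / x i) :
    ∀ lam : ℝ,
      (P - lam • (1 : Matrix (Fin n) (Fin n) ℝ)).det =
        (-1 : ℝ) ^ n * lam ^ (n - 3) *
          (lam ^ 3 - n * lam ^ 2 - (γ / δ + δ / γ) -
            ((n : ℝ) - 3) * (γ + δ + 1 / γ + 1 / δ) + (4 * n - 10)) := by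
  intro lam
  have h0n : (0 : ℕ) < n := by omega
  have h1n : (1 : ℕ) < n := by omega
  have h2n : (2 : ℕ) < n := by omega
  set i0 : Fin n := ⟨0, h0n⟩ with hi0def
  set i1 : Fin n := ⟨1, h1n⟩ with hi1def
  set i2 : Fin n := ⟨2, h2n⟩ with hi2def
  have h01 : i0 ≠ i1 := Fin.ne_of_val_ne (by norm_num)
  have h02 : i0 ≠ i2 := Fin.ne_of_val_ne (by norm_num)
  have h12 : i1 ≠ i2 := Fin.ne_of_val_ne (by norm_num)
  have hx0' : x i0 = 1 := hx0
  have hxne : ∀ i, x i ≠ 0 := fun i => (hx i).ne'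
  set a : Fin n → ℝ :=
    fun j => (δ - 1) * (if j = i1 then 1 else 0) + (γ - 1) * (if j = i2 then 1 else 0) with ha
  set b : Fin n → ℝ :=
    fun j => (1/δ - 1) * (if j = i1 then 1 else 0) + (1/γ - 1) * (if j = i2 then 1 else 0) with hb
  set U : Matrix (Fin n) (Fin 3) ℝ :=
    Matrix.of (fun i k => if k = 0 then 1 else if k = 1 then (if i = i0 then 1 else 0) else b i)
    with hU
  set V : Matrix (Fin 3) (Fin n) ℝ :=
    Matrix.of (fun k j => if k = 0 then 1 else if k = 1 then a j else (if j = i0 then 1 else 0))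
    with hV
  have hUV : ∀ i j, (U * V) i j
      = 1 + (if i = i0 then 1 else 0) * a j + b i * (if j = i0 then 1 else 0) := by
    intro i j
    simp [hU, hV, Matrix.mul_apply, Fin.sum_univ_three]
  have ha_i0 : a i0 = 0 := by
    rw [ha]; simp [h01, h02]
  have hb_i0 : b i0 = 0 := by
    rw [hb]; simp [h01, h02]
  have ha_i1 : a i1 = δ - 1 := by rw [ha]; simp [h12]
  have ha_i2 : a i2 = γ - 1 := by rw [ha]; simp [Ne.symm h12]
  have hb_i1 : b i1 = 1/δ - 1 := by rw [hb]; simp [h12]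
  have hb_i2 : b i2 = 1/γ - 1 := by rw [hb]; simp [Ne.symm h12]
  have hPUV : ∀ i j, P i j = (x i)⁻¹ * ((U * V) i j) * x j := by
    intro i j
    rw [hP i j]
    split_ifs with hc1 hc2 hc3 hc4
    · obtain ⟨hi, hj⟩ := hc1
      subst hi; subst hj
      rw [hUV, if_pos rfl, if_neg (Ne.symm h01), hb_i0, hx0', ha_i1]
      ring
    · obtain ⟨hi, hj⟩ := hc2
      subst hi; subst hj
      rw [hUV, if_pos rfl, if_neg (Ne.symm h02), hb_i0, hx0', ha_i2]
      ring
    · obtain ⟨hi, hj⟩ := hc3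
      subst hi; subst hj
      rw [hUV, if_neg (Ne.symm h01), if_pos rfl, hx0', hb_i1]
      field_simp [hδ.ne', hxne i1]
      ring
    · obtain ⟨hi, hj⟩ := hc4
      subst hi; subst hj
      rw [hUV, if_neg (Ne.symm h02), if_pos rfl, hx0', hb_i2]
      field_simp [hγ.ne', hxne i2]
      ring
    · rw [hUV]
      have hz : (if i = i0 then (1:ℝ) else 0) * a j + b i * (if j = i0 then 1 else 0) = 0 := by
        by_cases hi : i = i0
        · have hj1 : j ≠ i1 := fun h => hc1 ⟨hi, h⟩
          have hj2 : j ≠ i2 := fun h => hc2 ⟨hi, h⟩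
          rw [ha, hb]
          by_cases hj : j = i0 <;> simp [hi, hj, hj1, hj2, h01, h02]
        · by_cases hj : j = i0
          · have hi1' : i ≠ i1 := fun h => hc3 ⟨h, hj⟩
            have hi2' : i ≠ i2 := fun h => hc4 ⟨h, hj⟩
            rw [hb]
            simp [hi, hj, hi1', hi2']
          · simp [hi, hj]
      rw [add_assoc, hz, add_zero, mul_one, div_eq_mul_inv]
      ring
  have key : (P - lam • 1)
      = Matrix.diagonal (fun i => (x i)⁻¹) * ((U * V) - lam • 1) * Matrix.diagonal x := by
    ext i j
    rw [Matrix.mul_diagonal, Matrix.diagonal_mul]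
    simp only [Matrix.sub_apply, Matrix.smul_apply, Matrix.one_apply, smul_eq_mul]
    rw [hPUV i j]
    have hxx : (x i)⁻¹ * x i = 1 := inv_mul_cancel₀ (hxne i)
    by_cases hij : i = j
    · subst hij
      rw [if_pos rfl]
      linear_combination lam * hxx
    · rw [if_neg hij]
      ring
  have hprod : (∏ i, (x i)⁻¹) * ∏ i, x i = 1 := by
    rw [← Finset.prod_mul_distrib]
    exact Finset.prod_eq_one (fun i _ => inv_mul_cancel₀ (hxne i))
  have hdetP : (P - lam • 1).det = ((U * V) - lam • 1).det := by
    rw [key, Matrix.det_mul, Matrix.det_mul, Matrix.det_diagonal, Matrix.det_diagonal]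
    linear_combination ((U * V) - lam • (1 : Matrix (Fin n) (Fin n) ℝ)).det * hprod
  rcases eq_or_ne lam 0 with h0 | hl
  · subst h0
    have hdet0 : (U * V).det = 0 := by
      by_contra hdd
      have hu : IsUnit (U * V) :=
        (Matrix.isUnit_iff_isUnit_det _).2 (isUnit_iff_ne_zero.2 hdd)
      have hr := Matrix.rank_of_isUnit _ hu
      have hle : (U * V).rank ≤ 3 :=
        le_trans (Matrix.rank_mul_le_left U V) (by simpa using U.rank_le_card_width)
      rw [hr] at hle
      simp at hle
      omega
    rw [hdetP]
    simp [hdet0, zero_pow (show n - 3 ≠ 0 by omega)]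
  · -- nonzero lam
    have hsum_ind : ∀ c : Fin n, (∑ j, if j = c then (1:ℝ) else 0) = 1 := by
      intro c; simp
    have hsum_a : ∑ j, a j = (δ - 1) + (γ - 1) := by
      rw [ha]
      rw [Finset.sum_add_distrib, ← Finset.mul_sum, ← Finset.mul_sum, hsum_ind, hsum_ind,
        mul_one, mul_one]
    have hsum_b : ∑ j, b j = (1/δ - 1) + (1/γ - 1) := by
      rw [hb]
      rw [Finset.sum_add_distrib, ← Finset.mul_sum, ← Finset.mul_sum, hsum_ind, hsum_ind,
        mul_one, mul_one]
    have hab : ∀ j, a j * b j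
        = ((δ - 1) * (1/δ - 1)) * (if j = i1 then 1 else 0)
          + ((γ - 1) * (1/γ - 1)) * (if j = i2 then 1 else 0) := by
      intro j
      rw [ha, hb]
      by_cases hj1 : j = i1
      · simp [hj1, h12] <;> ring
      · by_cases hj2 : j = i2
        · simp [hj2, Ne.symm h12] <;> ring
        · simp [hj1, hj2]
    have hsum_ab : ∑ j, a j * b j = (δ - 1) * (1/δ - 1) + (γ - 1) * (1/γ - 1) := by
      simp_rw [hab]
      rw [Finset.sum_add_distrib, ← Finset.mul_sum, ← Finset.mul_sum, hsum_ind, hsum_ind,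
        mul_one, mul_one]
    have hsum_one : (∑ _j : Fin n, (1:ℝ)) = n := by simp
    have hG00 : (V * U) 0 0 = (n : ℝ) := by
      simp only [hV, hU, Matrix.mul_apply, Matrix.of_apply]
      simpa using hsum_one
    have hG01 : (V * U) 0 1 = 1 := by
      simp only [hV, hU, Matrix.mul_apply, Matrix.of_apply]
      simpa using hsum_ind i0
    have hG02 : (V * U) 0 2 = (1/δ - 1) + (1/γ - 1) := by
      simp only [hV, hU, Matrix.mul_apply, Matrix.of_apply]
      simpa using hsum_b
    have hG10 : (V * U) 1 0 = (δ - 1) + (γ - 1) := by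
      simp only [hV, hU, Matrix.mul_apply, Matrix.of_apply]
      simpa using hsum_a
    have hG11 : (V * U) 1 1 = 0 := by
      simp only [hV, hU, Matrix.mul_apply, Matrix.of_apply]
      simpa using ha_i0
    have hG12 : (V * U) 1 2 = (δ - 1) * (1/δ - 1) + (γ - 1) * (1/γ - 1) := by
      simp only [hV, hU, Matrix.mul_apply, Matrix.of_apply]
      simpa using hsum_ab
    have hG20 : (V * U) 2 0 = 1 := by
      simp only [hV, hU, Matrix.mul_apply, Matrix.of_apply]
      simpa using hsum_ind i0
    have hG21 : (V * U) 2 1 = 1 := by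
      simp only [hV, hU, Matrix.mul_apply, Matrix.of_apply]
      simp
    have hG22 : (V * U) 2 2 = 0 := by
      simp only [hV, hU, Matrix.mul_apply, Matrix.of_apply]
      simpa using hb_i0
    have hstep : (U * V) - lam • 1 = (-lam) • (1 + (-lam)⁻¹ • (U * V)) := by
      rw [smul_add, smul_smul, mul_inv_cancel₀ (neg_ne_zero.mpr hl), one_smul, neg_smul]
      abel
    rw [hdetP, hstep, Matrix.det_smul, ← Matrix.smul_mul, Matrix.det_one_add_mul_comm,
      Matrix.mul_smul, Matrix.det_fin_three]
    simp only [Matrix.add_apply, Matrix.smul_apply, Matrix.one_apply, smul_eq_mul,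
      Fintype.card_fin]
    rw [hG00, hG01, hG02, hG10, hG11, hG12, hG20, hG21, hG22]
    have hpow : lam ^ n = lam ^ (n - 3) * lam ^ 3 := by
      rw [← pow_add]; congr 1; omega
    rw [neg_pow, hpow]
    have hml : -lam ≠ 0 := neg_ne_zero.mpr hl
    simp only [show ((0:Fin 3) = 0) = True by simp, show ((0:Fin 3) = 1) = False by simp,
      show ((0:Fin 3) = 2) = False by simp, show ((1:Fin 3) = 0) = False by simp,
      show ((1:Fin 3) = 1) = True by simp, show ((1:Fin 3) = 2) = False by simp,
      show ((2:Fin 3) = 0) = False by simp, show ((2:Fin 3) = 1) = False by simp,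
      show ((2:Fin 3) = 2) = True by simp, if_true, if_false]
    field_simp [hγ.ne', hδ.ne']
    ring
end
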